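/- Let κ : ℝ → ℝ be any function, let ϑ ∈ ℂ, and let u : ℝ → ℂ² be differentiable with ν_F|k'|·m₁(−i u'(t)) + ϑ⋆κ(t)·m₃ u(t) = ϑ·u(t) for all t ∈ ℝ. Then the function v := m₂u is differentiable and satisfies ν_F|k'|·m₁(−i v'(t)) + ϑ⋆κ(t)·m₃ v(t) = −ϑ·v(t) for all t ∈ ℝ. (Conjugation by m₂ flips the sign of eigenvalues of the Dirac operator D⋆.) -/

import Mathlib

open Matrix

/-- The matrix `m₁ = (ν_F|k'|)⁻¹ [[0, ν⋆k'], [conj(ν⋆k'), 0]]`. -/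
noncomputable def m1 (ν k' : ℂ) : Matrix (Fin 2) (Fin 2) ℂ :=
  (‖ν‖ * ‖k'‖)⁻¹ • !![0, ν * k'; (starRingEnd ℂ) (ν * k'), 0]

/-- The matrix `m₂ = (ν_F|ℓ|)⁻¹ [[0, ν⋆ℓ], [conj(ν⋆ℓ), 0]]`. -/
noncomputable def m2 (ν ℓ : ℂ) : Matrix (Fin 2) (Fin 2) ℂ :=
  (‖ν‖ * ‖ℓ‖)⁻¹ • !![0, ν * ℓ; (starRingEnd ℂ) (ν * ℓ), 0]

/-- The matrix `m₃ = [[1, 0], [0, −1]]`. -/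
def m3 : Matrix (Fin 2) (Fin 2) ℂ := !![1, 0; 0, -1]

lemma m1_m2_anticomm (ν k' ℓ : ℂ) (horth : (k' * (starRingEnd ℂ) ℓ).re = 0) :
    m1 ν k' * m2 ν ℓ = -(m2 ν ℓ * m1 ν k') := by
  have hz : k' * (starRingEnd ℂ) ℓ + (starRingEnd ℂ) k' * ℓ = 0 := by
    have h := Complex.add_conj (k' * (starRingEnd ℂ) ℓ)
    rw [horth] at h
    simpa [_root_.map_mul] using h
  ext i j
  fin_cases i <;> fin_cases j <;>
    simp [m1, m2, Matrix.mul_apply, Fin.sum_univ_two, _root_.map_mul] <;>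
    ring_nf <;>
    linear_combination (‖ν‖ * ‖k'‖ : ℂ)⁻¹ * (‖ν‖ * ‖ℓ‖ : ℂ)⁻¹ * ν * (starRingEnd ℂ) ν * hz

lemma m3_m2_anticomm (ν ℓ : ℂ) : m3 * m2 ν ℓ = -(m2 ν ℓ * m3) := by
  ext i j
  fin_cases i <;> fin_cases j <;>
    simp [m2, m3, Matrix.mul_apply, Fin.sum_univ_two]

/-- Conjugating by `m₂` flips the sign of the eigenvalues of
`D⋆ = ν_F|k'| m₁ D_t + ϑ⋆κ m₃`. -/
theorem stmt12 (ϑstar : ℝ) (hϑstar : ϑstar ≠ 0) (ν k' ℓ : ℂ)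
    (hν : ν ≠ 0) (hk : k' ≠ 0) (hℓ : ℓ ≠ 0)
    (horth : (k' * (starRingEnd ℂ) ℓ).re = 0)
    (κ : ℝ → ℝ) (ϑ : ℂ) (u : ℝ → Fin 2 → ℂ) (hu : Differentiable ℝ u)
    (heq : ∀ t : ℝ,
      (‖ν‖ * ‖k'‖) • (m1 ν k').mulVec ((-Complex.I) • deriv u t) +
        (ϑstar * κ t) • m3.mulVec (u t) = ϑ • u t) :
    Differentiable ℝ (fun t => (m2 ν ℓ).mulVec (u t)) ∧
    ∀ t : ℝ,
      (‖ν‖ * ‖k'‖) • (m1 ν k').mulVec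
          ((-Complex.I) • deriv (fun s => (m2 ν ℓ).mulVec (u s)) t) +
        (ϑstar * κ t) • m3.mulVec ((m2 ν ℓ).mulVec (u t)) =
      (-ϑ) • (m2 ν ℓ).mulVec (u t) := by
  classical
  set L : (Fin 2 → ℂ) →L[ℝ] (Fin 2 → ℂ) :=
    LinearMap.toContinuousLinearMap
      (((m2 ν ℓ).mulVecLin).restrictScalars ℝ) with hL
  have hLapp : ∀ v, L v = (m2 ν ℓ).mulVec v := fun v => rfl
  have hder : ∀ t, HasDerivAt (fun s => (m2 ν ℓ).mulVec (u s))
      ((m2 ν ℓ).mulVec (deriv u t)) t := by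
    intro t
    have := L.hasFDerivAt.comp_hasDerivAt t (hu t).hasDerivAt
    simpa [hLapp, Function.comp_def] using this
  refine ⟨fun t => ((hder t).differentiableAt), fun t => ?_⟩
  have hderiv : deriv (fun s => (m2 ν ℓ).mulVec (u s)) t
      = (m2 ν ℓ).mulVec (deriv u t) := (hder t).deriv
  rw [hderiv]
  have h1 := m1_m2_anticomm ν k' ℓ horth
  have h3 := m3_m2_anticomm ν ℓ
  have key : (m1 ν k').mulVec ((m2 ν ℓ).mulVec ((-Complex.I) • deriv u t))
      = -((m2 ν ℓ).mulVec ((m1 ν k').mulVec ((-Complex.I) • deriv u t))) := by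
    rw [Matrix.mulVec_mulVec, Matrix.mulVec_mulVec, h1, Matrix.neg_mulVec]
  have key3 : m3.mulVec ((m2 ν ℓ).mulVec (u t))
      = -((m2 ν ℓ).mulVec (m3.mulVec (u t))) := by
    rw [Matrix.mulVec_mulVec, Matrix.mulVec_mulVec, h3, Matrix.neg_mulVec]
  have hsm : (m2 ν ℓ).mulVec ((-Complex.I) • deriv u t)
      = (-Complex.I) • (m2 ν ℓ).mulVec (deriv u t) := by
    simp [Matrix.mulVec_smul, Matrix.mulVec_neg]
  rw [← hsm, key, key3]
  have := congrArg (fun v => -((m2 ν ℓ).mulVec v)) (heq t)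
  simp only [Matrix.mulVec_add, Matrix.mulVec_smul, neg_add, smul_neg, neg_smul] at this ⊢
  linear_combination (norm := module) this
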